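/- Let q be an odd prime power, let m be an odd prime, and let n = q^m − 1. Then the number of monic self-reciprocal divisors g of x^n − 1 in GF(q)[x] with deg g ≥ 1 equals 2^{(q^m + (m−1)q + m)/(2m)} − 1 (equivalently, the total number of reversible cyclic codes of length n over GF(q) is 2^{(q^m + (m−1)q + m)/(2m)} − 1). -/

import Mathlib

open Polynomial

/-- A polynomial `f` over a field (with `f 0 ≠ 0`) is self-reciprocal if it equals its
reciprocal `f*(x) = f(0)⁻¹ · x^{deg f} · f(1/x)`. -/
def SelfReciprocal {F : Type*} [Field F] (f : Polynomial F) : Prop :=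
  (f.coeff 0)⁻¹ • f.reverse = f

namespace RevCyc

section Comb
variable {α : Type*} [DecidableEq α]


variable {α : Type*} [DecidableEq α]

lemma card_invariant_powerset (σ : α → α) (s : Finset α) :
    (∀ a ∈ s, σ a ∈ s) → (∀ a ∈ s, σ (σ a) = a) →
    ((s.powerset.filter fun t => ∀ a ∈ t, σ a ∈ t).card =
      2 ^ ((s.card + (s.filter fun a => σ a = a).card) / 2)) := by
  induction s using Finset.strongInduction with
  | _ s ih =>
    intro hmap hinv
    rcases s.eq_empty_or_nonempty with rfl | ⟨a, ha⟩
    · simp [Finset.filter_singleton]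
    · set o : Finset α := insert a {σ a} with ho
      have hoa : a ∈ o := Finset.mem_insert_self _ _
      have hosa : σ a ∈ o := Finset.mem_insert_of_mem (Finset.mem_singleton_self _)
      have hos : o ⊆ s := by
        intro b hb
        rcases Finset.mem_insert.mp hb with rfl | hb
        · exact ha
        · rw [Finset.mem_singleton.mp hb]; exact hmap a ha
      set s' := s \ o with hs'
      have hss : s' ⊂ s := Finset.sdiff_ssubset hos ⟨a, hoa⟩
      -- σ is involutive-injective on s
      have hmem' : ∀ b ∈ s', σ b ∈ s' := by
        intro b hb
        obtain ⟨hbs, hbo⟩ := Finset.mem_sdiff.mp hb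
        refine Finset.mem_sdiff.mpr ⟨hmap b hbs, ?_⟩
        intro hσb
        rcases Finset.mem_insert.mp hσb with h | h
        · apply hbo; rw [← hinv b hbs, h]; exact hosa
        · apply hbo
          rw [Finset.mem_singleton] at h
          have : b = a := by
            have := congrArg σ h
            rwa [hinv b hbs, hinv a ha] at this
          rw [this]; exact hoa
      have hinv' : ∀ b ∈ s', σ (σ b) = b := fun b hb => hinv b (Finset.mem_sdiff.mp hb).1
      -- the two halves of the invariant powerset of s
      have hB : s.powerset.filter (fun t => (∀ a ∈ t, σ a ∈ t) ∧ a ∉ t) =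
          s'.powerset.filter (fun t => ∀ a ∈ t, σ a ∈ t) := by
        ext t
        simp only [Finset.mem_filter, Finset.mem_powerset]
        constructor
        · rintro ⟨hts, htinv, hat⟩
          refine ⟨fun b hb => ?_, htinv⟩
          refine Finset.mem_sdiff.mpr ⟨hts hb, ?_⟩
          intro hbo
          rcases Finset.mem_insert.mp hbo with rfl | hbo
          · exact hat hb
          · rw [Finset.mem_singleton] at hbo
            subst hbo
            exact hat (by simpa [hinv a ha] using htinv _ hb)
        · rintro ⟨hts, htinv⟩
          exact ⟨hts.trans Finset.sdiff_subset, htinv,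
            fun hat => (Finset.mem_sdiff.mp (hts hat)).2 hoa⟩
      have hA : (s.powerset.filter (fun t => (∀ a ∈ t, σ a ∈ t) ∧ a ∈ t)).card =
          (s'.powerset.filter (fun t => ∀ a ∈ t, σ a ∈ t)).card := by
        apply Finset.card_bij (fun t _ => t \ o)
        · rintro t ht
          simp only [Finset.mem_filter, Finset.mem_powerset] at ht ⊢
          obtain ⟨hts, htinv, hat⟩ := ht
          refine ⟨Finset.sdiff_subset_sdiff hts le_rfl, fun b hb => ?_⟩
          obtain ⟨hbt, hbo⟩ := Finset.mem_sdiff.mp hb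
          refine Finset.mem_sdiff.mpr ⟨htinv b hbt, ?_⟩
          intro hσb
          rcases Finset.mem_insert.mp hσb with h | h
          · apply hbo; rw [← hinv b (hts hbt), h]; exact hosa
          · apply hbo
            rw [Finset.mem_singleton] at h
            have : b = a := by
              have := congrArg σ h
              rwa [hinv b (hts hbt), hinv a ha] at this
            rw [this]; exact hoa
        · intro t1 h1 t2 h2 heq
          simp only [Finset.mem_filter, Finset.mem_powerset] at h1 h2
          have k1 : t1 = (t1 \ o) ∪ o := by
            rw [Finset.sdiff_union_self_eq_union]
            apply (Finset.union_eq_left.mpr _).symm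
            intro b hb
            rcases Finset.mem_insert.mp hb with rfl | hb
            · exact h1.2.2
            · rw [Finset.mem_singleton.mp hb]; exact h1.2.1 a h1.2.2
          have k2 : t2 = (t2 \ o) ∪ o := by
            rw [Finset.sdiff_union_self_eq_union]
            apply (Finset.union_eq_left.mpr _).symm
            intro b hb
            rcases Finset.mem_insert.mp hb with rfl | hb
            · exact h2.2.2
            · rw [Finset.mem_singleton.mp hb]; exact h2.2.1 a h2.2.2
          rw [k1, k2, heq]
        · intro t ht
          simp only [Finset.mem_filter, Finset.mem_powerset] at ht
          refine ⟨t ∪ o, ?_, ?_⟩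
          · simp only [Finset.mem_filter, Finset.mem_powerset]
            refine ⟨Finset.union_subset (ht.1.trans Finset.sdiff_subset) hos,
              fun b hb => ?_, Finset.mem_union_right _ hoa⟩
            rcases Finset.mem_union.mp hb with hb | hb
            · exact Finset.mem_union_left _ (ht.2 b hb)
            · rcases Finset.mem_insert.mp hb with rfl | hb
              · exact Finset.mem_union_right _ hosa
              · rw [Finset.mem_singleton.mp hb, hinv a ha]
                exact Finset.mem_union_right _ hoa
          · have : t ∩ o = ∅ := by
              apply Finset.eq_empty_of_forall_notMem
              intro b hb
              obtain ⟨hbt, hbo⟩ := Finset.mem_inter.mp hb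
              exact (Finset.mem_sdiff.mp (ht.1 hbt)).2 hbo
            rw [Finset.union_sdiff_right, Finset.sdiff_eq_self_iff_disjoint.mpr
              (Finset.disjoint_iff_inter_eq_empty.mpr this)]
      -- split
      have hsplit : (s.powerset.filter fun t => ∀ a ∈ t, σ a ∈ t).card =
          (s.powerset.filter (fun t => (∀ a ∈ t, σ a ∈ t) ∧ a ∈ t)).card +
          (s.powerset.filter (fun t => (∀ a ∈ t, σ a ∈ t) ∧ a ∉ t)).card := by
        rw [← Finset.filter_filter, ← Finset.filter_filter,
          Finset.card_filter_add_card_filter_not]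
      have hrec := ih s' hss hmem' hinv'
      -- exponent bookkeeping
      have hcard : s.card = s'.card + o.card := by
        have h1 : s'.card = s.card - o.card := by rw [hs', Finset.card_sdiff_of_subset hos]
        have h2 := Finset.card_le_card hos
        omega
      have hkey : s.card + (s.filter fun a => σ a = a).card =
          (s'.card + (s'.filter fun a => σ a = a).card) + 2 := by
        rcases eq_or_ne (σ a) a with hfixa | hfixa
        · have hoeq : o = {a} := by rw [ho, hfixa]; simp
          have hocard : o.card = 1 := by rw [hoeq]; simp
          have hfeq : s.filter (fun a => σ a = a) =
              insert a (s'.filter fun a => σ a = a) := by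
            ext b
            simp only [Finset.mem_filter, Finset.mem_insert, hs', Finset.mem_sdiff, hoeq,
              Finset.mem_singleton]
            constructor
            · rintro ⟨hbs, hbf⟩
              by_cases hba : b = a
              · exact Or.inl hba
              · exact Or.inr ⟨⟨hbs, hba⟩, hbf⟩
            · rintro (rfl | ⟨⟨hbs, _⟩, hbf⟩)
              · exact ⟨ha, hfixa⟩
              · exact ⟨hbs, hbf⟩
          have hans : a ∉ (s'.filter fun a => σ a = a) := by
            simp only [Finset.mem_filter, hs', Finset.mem_sdiff, hoeq, Finset.mem_singleton]
            tauto
          have := Finset.card_insert_of_notMem hans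
          rw [hfeq, this]
          omega
        · have hocard : o.card = 2 := by
            rw [ho, Finset.card_insert_of_notMem (by simpa using fun h => hfixa h.symm)]
            simp
          have hfeq : s.filter (fun a => σ a = a) = (s'.filter fun a => σ a = a) := by
            ext b
            simp only [Finset.mem_filter, hs', Finset.mem_sdiff, ho, Finset.mem_insert,
              Finset.mem_singleton]
            constructor
            · rintro ⟨hbs, hbf⟩
              refine ⟨⟨hbs, ?_⟩, hbf⟩
              rintro (rfl | rfl)
              · exact hfixa hbf
              · exact hfixa (by rw [← hbf, hinv a ha])
            · rintro ⟨⟨hbs, _⟩, hbf⟩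
              exact ⟨hbs, hbf⟩
          rw [hfeq]
          omega
      rw [hsplit, hA, hB, hrec, ← two_mul, hkey]
      rw [show ((s'.card + (s'.filter fun a => σ a = a).card + 2) / 2)
          = (s'.card + (s'.filter fun a => σ a = a).card) / 2 + 1 by omega]
      ring
  

end Comb

section Field1


variable {F : Type} [Field F]

noncomputable def sigma (f : F[X]) : F[X] := (f.coeff 0)⁻¹ • f.reverse

lemma sigma_eq (f : F[X]) : sigma f = C (f.coeff 0)⁻¹ * f.reverse := by
  rw [sigma, smul_eq_C_mul]

lemma natDegree_reverse_eq {f : F[X]} (h0 : f.coeff 0 ≠ 0) :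
    f.reverse.natDegree = f.natDegree := by
  have ht : f.natTrailingDegree = 0 := natTrailingDegree_eq_zero.mpr (Or.inr h0)
  rw [reverse_natDegree, ht, tsub_zero]

lemma natDegree_sigma {f : F[X]} (h0 : f.coeff 0 ≠ 0) :
    (sigma f).natDegree = f.natDegree := by
  rw [sigma_eq, natDegree_C_mul (inv_ne_zero h0), natDegree_reverse_eq h0]

lemma sigma_monic {f : F[X]} (hf : f.Monic) (h0 : f.coeff 0 ≠ 0) : (sigma f).Monic := by
  have : (sigma f).leadingCoeff = (f.coeff 0)⁻¹ * f.reverse.leadingCoeff := by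
    rw [sigma_eq, leadingCoeff_mul, leadingCoeff_C]
  rw [Monic, this, reverse_leadingCoeff, trailingCoeff,
    natTrailingDegree_eq_zero.mpr (Or.inr h0), inv_mul_cancel₀ h0]

lemma sigma_mul (f g : F[X]) : sigma (f * g) = sigma f * sigma g := by
  rw [sigma_eq, sigma_eq, sigma_eq, reverse_mul_of_domain, mul_coeff_zero, mul_inv, C_mul]
  ring

lemma sigma_one : sigma (1 : F[X]) = 1 := by
  have : (1 : F[X]).reverse = 1 := by
    unfold Polynomial.reverse
    simp [reflect_one]
  rw [sigma_eq, this, coeff_one_zero, inv_one, C_1, one_mul]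

lemma sigma_finset_prod (t : Finset F[X]) : sigma (∏ f ∈ t, f) = ∏ f ∈ t, sigma f := by
  classical
  induction t using Finset.induction with
  | empty => simpa using sigma_one
  | insert _ _ hns ih =>
    rw [Finset.prod_insert hns, Finset.prod_insert hns, sigma_mul, ih]

lemma sigma_X_pow_sub_one {n : ℕ} (hn : n ≠ 0) :
    sigma ((X : F[X]) ^ n - 1) = X ^ n - 1 := by
  have hc : ((X : F[X]) ^ n - 1).coeff 0 = -1 := by
    rw [coeff_sub, coeff_X_pow, coeff_one]
    simp [hn, Ne.symm hn]
  have hd : ((X : F[X]) ^ n - 1).natDegree = n := by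
    rw [show (1 : F[X]) = C 1 by rw [C_1]]
    exact natDegree_X_pow_sub_C
  have hrev : ((X : F[X]) ^ n - 1).reverse = 1 - X ^ n := by
    unfold Polynomial.reverse
    rw [hd, reflect_sub, reflect_one, reflect_monomial, revAt_le le_rfl, tsub_self, pow_zero]
  rw [sigma_eq, hc, hrev, inv_neg_one, ← C_1, C_neg]
  rw [C_1]
  ring

lemma sigma_linear {c : F} (hc : c ≠ 0) : sigma (X + C c) = X + C c⁻¹ := by
  have h0 : (X + C c).coeff 0 = c := by simp
  have hd : ((X : F[X]) + C c).natDegree = 1 := natDegree_X_add_C c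
  have hrev : ((X : F[X]) + C c).reverse = 1 + C c * X := by
    unfold Polynomial.reverse
    rw [hd, reflect_add, reflect_C c 1]
    congr 1
    · simpa using reflect_one_X
    · rw [pow_one]
  rw [sigma_eq, h0, hrev, mul_add, mul_one, ← mul_assoc, ← C_mul, inv_mul_cancel₀ hc, C_1,
    one_mul, add_comm]

lemma sigma_sigma {f : F[X]} (hf : f.Monic) (h0 : f.coeff 0 ≠ 0) : sigma (sigma f) = f := by
  have hc : (sigma f).coeff 0 = (f.coeff 0)⁻¹ := by
    rw [sigma_eq, mul_coeff_zero, coeff_C_zero, coeff_zero_reverse, hf.leadingCoeff, mul_one]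
  rw [sigma_eq, hc, inv_inv, sigma_eq]
  have hrev : (C (f.coeff 0)⁻¹ * f.reverse).reverse = C (f.coeff 0)⁻¹ * f.reverse.reverse := by
    unfold Polynomial.reverse
    rw [natDegree_C_mul (inv_ne_zero h0), reflect_C_mul]
  have hrr : f.reverse.reverse = f := by
    ext n
    rw [coeff_reverse, natDegree_reverse_eq h0, coeff_reverse, revAt_invol]
  rw [hrev, hrr, ← mul_assoc, ← C_mul, mul_inv_cancel₀ h0, C_1, one_mul]

lemma sigma_irreducible {f : F[X]} (hf : f.Monic) (h0 : f.coeff 0 ≠ 0)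
    (hirr : Irreducible f) : Irreducible (sigma f) := by
  constructor
  · intro hu
    have h1 : (sigma f).natDegree = 0 := natDegree_eq_zero_of_isUnit hu
    rw [natDegree_sigma h0] at h1
    exact hirr.not_isUnit (by rw [hf.natDegree_eq_zero.mp h1]; exact isUnit_one)
  · intro a b hab
    have hab0 : (sigma f).coeff 0 ≠ 0 := by
      rw [sigma_eq, mul_coeff_zero, coeff_C_zero, coeff_zero_reverse, hf.leadingCoeff, mul_one]
      exact inv_ne_zero h0
    have ha0 : a.coeff 0 ≠ 0 := fun h => by
      rw [hab, mul_coeff_zero, h, zero_mul] at hab0; exact hab0 rfl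
    have hb0 : b.coeff 0 ≠ 0 := fun h => by
      rw [hab, mul_coeff_zero, h, mul_zero] at hab0; exact hab0 rfl
    have hff : f = sigma a * sigma b := by
      rw [← sigma_mul, ← hab, sigma_sigma hf h0]
    rcases hirr.isUnit_or_isUnit hff with h | h
    · left
      have hda : a.natDegree = 0 := by
        rw [← natDegree_sigma ha0]; exact natDegree_eq_zero_of_isUnit h
      obtain ⟨c, hc⟩ := natDegree_eq_zero.mp hda
      rw [← hc]
      refine isUnit_C.mpr (isUnit_iff_ne_zero.mpr ?_)
      intro h0c
      rw [← hc, h0c] at ha0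
      simp at ha0
    · right
      have hdb : b.natDegree = 0 := by
        rw [← natDegree_sigma hb0]; exact natDegree_eq_zero_of_isUnit h
      obtain ⟨c, hc⟩ := natDegree_eq_zero.mp hdb
      rw [← hc]
      refine isUnit_C.mpr (isUnit_iff_ne_zero.mpr ?_)
      intro h0c
      rw [← hc, h0c] at hb0
      simp at hb0



variable {F : Type} [Field F]

lemma sigma_ne_self_of_odd {f : F[X]} (h2 : (-1 : F) ≠ 1) (hf : f.Monic)
    (h0 : f.coeff 0 ≠ 0) (hirr : Irreducible f) (hodd : Odd f.natDegree)
    (hdeg : 1 < f.natDegree) : sigma f ≠ f := by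
  intro hs
  rw [sigma_eq] at hs
  have hrev : f.reverse = C (f.coeff 0) * f := by
    calc f.reverse = C (f.coeff 0) * (C (f.coeff 0)⁻¹ * f.reverse) := by
          rw [← mul_assoc, ← C_mul, mul_inv_cancel₀ h0, C_1, one_mul]
      _ = C (f.coeff 0) * f := by rw [hs]
  have hroot : ∀ c : F, eval c f ≠ 0 := by
    intro c hc
    obtain ⟨g, hg⟩ := dvd_iff_isRoot.mpr hc
    rcases hirr.isUnit_or_isUnit hg with h | h
    · exact not_isUnit_of_natDegree_pos _ (by rw [natDegree_X_sub_C]; omega) h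
    · have hg0 : g ≠ 0 := fun h' => by simp [h'] at h
      have : f.natDegree = 1 := by
        rw [hg, natDegree_mul (X_sub_C_ne_zero c) hg0, natDegree_X_sub_C,
          natDegree_eq_zero_of_isUnit h]
      omega
  have he1 : eval 1 f.reverse = eval 1 f := by
    letI : Invertible (1 : F) := invertibleOne
    have h := eval₂_reverse_mul_pow (RingHom.id F) (1 : F) f
    simpa [eval₂_at_apply, invOf_one] using h
  have hem : eval (-1) f.reverse * (-1) ^ f.natDegree = eval (-1) f := by
    letI : Invertible (-1 : F) := ⟨-1, by ring, by ring⟩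
    have hinv : (⅟(-1 : F)) = -1 := invOf_eq_right_inv (by ring)
    have h := eval₂_reverse_mul_pow (RingHom.id F) (-1 : F) f
    rw [hinv] at h
    simpa [eval₂_at_apply] using h
  have hc1 : f.coeff 0 = 1 := by
    rw [hrev] at he1
    rw [eval_mul, eval_C] at he1
    have := mul_right_cancel₀ (hroot 1) (he1.trans (one_mul (eval 1 f)).symm)
    exact this
  have hcm : f.coeff 0 = -1 := by
    rw [hrev, eval_mul, eval_C, Odd.neg_one_pow hodd] at hem
    have h' : f.coeff 0 * (-1) * eval (-1) f = 1 * eval (-1) f := by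
      rw [one_mul]
      calc f.coeff 0 * (-1) * eval (-1) f = f.coeff 0 * eval (-1) f * (-1) := by ring
        _ = eval (-1) f := hem
    have h2' := mul_right_cancel₀ (hroot (-1)) h'
    have : f.coeff 0 = -1 := by
      have := congrArg (· * (-1)) h2'
      simpa using this
    exact this
  rw [hc1] at hcm
  exact h2 hcm.symm


end Field1

section Field2


variable {F : Type} [Field F] [Fintype F]

lemma natDegree_dvd_of_dvd_X_pow_card_pow_sub_one {q m : ℕ} (hq1 : 1 < q)
    (hF : Fintype.card F = q) (hm : 0 < m) {f : F[X]} (hf : f.Monic)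
    (hirr : Irreducible f) (hdvd : f ∣ X ^ (q ^ m - 1) - 1) :
    f.natDegree ∣ m := by
  set d := f.natDegree with hd
  have hdpos : 0 < d := hirr.natDegree_pos
  haveI : Fact (Irreducible f) := ⟨hirr⟩
  set K := AdjoinRoot f
  let pb : PowerBasis F K := AdjoinRoot.powerBasis' hf
  haveI : Fintype K := Module.fintypeOfFintype pb.basis
  have hcardK : Fintype.card K = q ^ d := by
    rw [Module.card_eq_pow_finrank (K := F), hF, pb.finrank, AdjoinRoot.powerBasis'_dim]
  set x := AdjoinRoot.root f with hx
  -- x ^ (q^m) = x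
  have hxn : x ^ (q ^ m - 1) = 1 := by
    obtain ⟨g, hg⟩ := hdvd
    have h0 : (aeval x) (X ^ (q ^ m - 1) - 1 : F[X]) = 0 := by
      rw [hg, map_mul, AdjoinRoot.aeval_eq, AdjoinRoot.mk_self, zero_mul]
    rw [map_sub, map_pow, aeval_X, map_one, sub_eq_zero] at h0
    exact h0
  have hqm1 : 1 ≤ q ^ m := Nat.one_le_pow _ _ (by omega)
  have hxq : x ^ q ^ m = x := by
    conv_lhs => rw [show q ^ m = (q ^ m - 1) + 1 by omega]
    rw [pow_add, hxn, one_mul, pow_one]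
  -- characteristic
  set p := ringChar F with hp
  haveI : CharP F p := ringChar.charP F
  obtain ⟨k, hpprime, hqpk⟩ := FiniteField.card F p
  haveI : CharP K p := charP_of_injective_algebraMap (algebraMap F K).injective p
  haveI : Fact (Nat.Prime p) := ⟨hpprime⟩
  haveI : ExpChar K p := ExpChar.prime hpprime
  -- every element of K satisfies y ^ q^m = y
  have hxm : ∀ y : K, y ^ q ^ m = y := by
    have hqk : q = p ^ (k : ℕ) := by rw [← hF, hqpk]
    have hψ : ∀ y : K, iterateFrobenius K p (k * m) y = y ^ q ^ m := by
      intro y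
      rw [iterateFrobenius_def, hqk, ← pow_mul]
    intro y
    obtain ⟨g, rfl⟩ := AdjoinRoot.mk_surjective y
    rw [← AdjoinRoot.aeval_eq, ← hψ, aeval_def, hom_eval₂]
    have hcomp : (iterateFrobenius K p (k * m)).comp (algebraMap F K) = algebraMap F K := by
      ext a
      rw [RingHom.comp_apply, hψ, ← map_pow]
      congr 1
      rw [← hF]
      exact FiniteField.pow_card_pow m a
    rw [hcomp, hψ, hxq]
  have hxd : ∀ y : K, y ^ q ^ d = y := by
    intro y
    rw [← hcardK]
    exact FiniteField.pow_card y
  -- gcd closure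
  have closure : ∀ a b : ℕ, (∀ y : K, y ^ q ^ a = y) → (∀ y : K, y ^ q ^ b = y) →
      ∀ y : K, y ^ q ^ Nat.gcd a b = y := by
    intro a b
    induction a, b using Nat.gcd.induction with
    | H0 n => intro _ hb y; simpa using hb y
    | H1 a b hapos ih =>
      intro hA hB
      rw [Nat.gcd_rec]
      apply ih ?_ hA
      intro z
      have hmul : ∀ (j : ℕ) (w : K), w ^ q ^ (a * j) = w := by
        intro j
        induction j with
        | zero => intro w; simp
        | succ j ihj =>
          intro w
          rw [Nat.mul_succ, pow_add, pow_mul, ihj, hA]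
      calc z ^ q ^ (b % a) = (z ^ q ^ (b % a)) ^ q ^ (a * (b / a)) := (hmul _ _).symm
        _ = z ^ q ^ b := by rw [← pow_mul, ← pow_add, Nat.mod_add_div]
        _ = z := hB z
  set g := Nat.gcd d m with hgdef
  have hgpos : 0 < g := Nat.gcd_pos_of_pos_left _ hdpos
  have hall : ∀ y : K, y ^ q ^ g = y := closure d m hxd hxm
  -- counting roots
  have hle : Fintype.card K ≤ q ^ g := by
    have hne : (X ^ q ^ g - X : K[X]) ≠ 0 :=
      FiniteField.X_pow_card_pow_sub_X_ne_zero K (by omega) hq1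
    have hdeg : (X ^ q ^ g - X : K[X]).natDegree = q ^ g :=
      FiniteField.X_pow_card_pow_sub_X_natDegree_eq K (by omega) hq1
    have hsub : (Finset.univ : Finset K).val ⊆ (X ^ q ^ g - X : K[X]).roots := by
      intro y _
      rw [Polynomial.mem_roots hne]
      simp only [IsRoot, eval_sub, eval_pow, eval_X]
      rw [hall y, sub_self]
    calc Fintype.card K = (Finset.univ : Finset K).card := rfl
      _ ≤ (X ^ q ^ g - X : K[X]).natDegree := Polynomial.card_le_degree_of_subset_roots hsub
      _ = q ^ g := hdeg
  have hdg : d ≤ g := by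
    rw [hcardK] at hle
    exact (Nat.pow_le_pow_iff_right hq1).mp hle
  have : g = d := le_antisymm (Nat.le_of_dvd hdpos (Nat.gcd_dvd_left _ _)) hdg
  rw [← this]
  exact Nat.gcd_dvd_right _ _


end Field2

end RevCyc

open RevCyc UniqueFactorizationMonoid

/-- For `q` an odd prime power, `m` an odd prime and `n = q^m − 1`, the number of monic
self-reciprocal divisors of `x^n − 1` of degree at least `1` over `GF(q)` (equivalently,
the number of reversible cyclic codes of length `n` over `GF(q)`) is
`2^{(q^m + (m−1)q + m)/(2m)} − 1`. -/
theorem count_reversible_cyclic_codes_odd (q m n : ℕ)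
    (hq : IsPrimePow q) (hqodd : Odd q) (hm : Nat.Prime m) (hmodd : Odd m)
    (hn : n = q ^ m - 1)
    (F : Type) [Field F] [Fintype F] (hF : Fintype.card F = q) :
    {g : Polynomial F | g.Monic ∧ g ∣ X ^ n - 1 ∧ 1 ≤ g.natDegree ∧
        SelfReciprocal g}.ncard = 2 ^ ((q ^ m + (m - 1) * q + m) / (2 * m)) - 1 := by
  classical
  have hq2 : 2 ≤ q := hq.two_le
  have hm2 : 2 ≤ m := hm.two_le
  have hm3 : 3 ≤ m := by
    have : m ≠ 2 := by rintro rfl; exact (by decide : ¬ Odd 2) hmodd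
    omega
  have hqm1 : 1 < q ^ m := Nat.one_lt_pow (by omega) (by omega)
  have hn0 : n ≠ 0 := by omega
  have hneven : Even n := by
    have : Odd (q ^ m) := hqodd.pow
    rw [hn]
    exact Nat.Odd.sub_odd this odd_one
  -- characteristic facts
  set p := ringChar F with hp
  haveI : CharP F p := ringChar.charP F
  obtain ⟨k, hpprime, hqpk⟩ := FiniteField.card F p
  have hqpk' : q = p ^ (k : ℕ) := by rw [← hF, hqpk]
  have hpodd : p ≠ 2 := by
    intro h
    have : Even q := by
      rw [hqpk']
      exact Nat.even_pow.mpr ⟨by rw [h]; exact even_two, k.ne_zero⟩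
    exact (Nat.not_even_iff_odd.mpr hqodd) this
  have hchar2 : (-1 : F) ≠ 1 := by
    intro h
    have h2 : ((2 : ℕ) : F) = 0 := by push_cast; linear_combination -h
    have hdvd := (CharP.cast_eq_zero_iff F p 2).mp h2
    exact hpodd ((Nat.prime_dvd_prime_iff_eq hpprime Nat.prime_two).mp hdvd)
  have hq0F : ((q : ℕ) : F) = 0 := by
    rw [hqpk']
    push_cast
    rw [show ((p : F)) = 0 from CharP.cast_eq_zero F p]
    exact zero_pow (by positivity)
  have hcastn : ((n : ℕ) : F) ≠ 0 := by
    have h1 : ((n : ℕ) : F) = -1 := by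
      rw [hn, Nat.cast_sub (by omega)]
      push_cast
      rw [hq0F]
      rw [zero_pow (by omega : m ≠ 0)]
      ring
    rw [h1]
    intro h
    exact one_ne_zero (neg_eq_zero.mp h)
  -- the polynomial and its factors
  set P : F[X] := X ^ n - 1 with hPdef
  have hPmonic : P.Monic := by
    have := monic_X_pow_sub_C (1 : F) hn0
    rw [C_1] at this
    exact this
  have hP0 : P ≠ 0 := hPmonic.ne_zero
  have hPsq : Squarefree P := by
    have hsep : Separable P := by
      have := separable_X_pow_sub_C (1 : F) hcastn one_ne_zero
      rwa [C_1] at this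
    exact hsep.squarefree
  have hPc0 : P.coeff 0 = -1 := by
    rw [hPdef, coeff_sub, coeff_X_pow, coeff_one]
    simp [hn0, Ne.symm hn0]
  have hPdeg : P.natDegree = n := by
    rw [hPdef, show (1 : F[X]) = C 1 by rw [C_1]]
    exact natDegree_X_pow_sub_C
  set S : Finset F[X] := (normalizedFactors P).toFinset with hSdef
  have hSval : S.val = normalizedFactors P := by
    rw [hSdef, Multiset.toFinset_val, Multiset.dedup_eq_self.mpr
      ((squarefree_iff_nodup_normalizedFactors hP0).mp hPsq)]
  have hmemS : ∀ f : F[X], f ∈ S ↔ f.Monic ∧ Irreducible f ∧ f ∣ P := by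
    intro f
    rw [hSdef, Multiset.mem_toFinset]
    constructor
    · intro hf
      have hirr := irreducible_of_normalized_factor f hf
      have hnorm := normalize_normalized_factor f hf
      have hne : f ≠ 0 := hirr.ne_zero
      have hmon : f.Monic := by
        rw [← hnorm]; exact monic_normalize hne
      exact ⟨hmon, hirr, dvd_of_mem_normalizedFactors hf⟩
    · rintro ⟨hmon, hirr, hdvd⟩
      have h1 : normalizedFactors f = {f} := by
        rw [normalizedFactors_irreducible hirr, hmon.normalize_eq_self]
      have h2 : normalizedFactors f ≤ normalizedFactors P :=
        (dvd_iff_normalizedFactors_le_normalizedFactors hmon.ne_zero hP0).mp hdvd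
      rw [h1] at h2
      exact Multiset.singleton_le.mp h2
  have hc0 : ∀ f : F[X], f ∣ P → f.coeff 0 ≠ 0 := by
    rintro f ⟨g, hg⟩ h
    rw [hg, mul_coeff_zero, h, zero_mul] at hPc0
    exact one_ne_zero (neg_eq_zero.mp hPc0.symm)
  have hdeg1m : ∀ f ∈ S, f.natDegree = 1 ∨ f.natDegree = m := by
    intro f hf
    obtain ⟨hmon, hirr, hdvd⟩ := (hmemS f).mp hf
    have hdvd' : f ∣ X ^ (q ^ m - 1) - 1 := by rwa [← hn]
    have := natDegree_dvd_of_dvd_X_pow_card_pow_sub_one (by omega : 1 < q) hF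
      (by omega : 0 < m) hmon hirr hdvd'
    rcases (Nat.Prime.eq_one_or_self_of_dvd hm _ this) with h | h
    · exact Or.inl h
    · exact Or.inr h
  -- sigma maps S to S
  have hsigP : sigma P = P := sigma_X_pow_sub_one hn0
  have hmapS : ∀ f ∈ S, sigma f ∈ S := by
    intro f hf
    obtain ⟨hmon, hirr, hdvd⟩ := (hmemS f).mp hf
    have h0 := hc0 f hdvd
    refine (hmemS _).mpr ⟨sigma_monic hmon h0, sigma_irreducible hmon h0 hirr, ?_⟩
    obtain ⟨g, hg⟩ := hdvd
    exact ⟨sigma g, by rw [← hsigP, hg, sigma_mul]⟩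
  have hinvS : ∀ f ∈ S, sigma (sigma f) = f := by
    intro f hf
    obtain ⟨hmon, hirr, hdvd⟩ := (hmemS f).mp hf
    exact sigma_sigma hmon (hc0 f hdvd)
  -- products of subsets of S
  have hprodval : ∀ t : Finset F[X], (∏ f ∈ t, f) = t.val.prod := by
    intro t
    rw [Finset.prod_eq_multiset_prod, Multiset.map_id']
  have hprod_factors : ∀ t : Finset F[X], t ⊆ S → normalizedFactors (∏ f ∈ t, f) = t.val := by
    intro t ht
    rw [hprodval]
    rw [normalizedFactors_prod_eq _ (fun f hf => ((hmemS f).mp (ht hf)).2.1)]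
    rw [Multiset.map_congr rfl (fun f hf => ((hmemS f).mp (ht hf)).1.normalize_eq_self)]
    exact Multiset.map_id _
  have hΦinj : ∀ t₁ ⊆ S, ∀ t₂ ⊆ S, (∏ f ∈ t₁, f) = (∏ f ∈ t₂, f) → t₁ = t₂ := by
    intro t₁ h₁ t₂ h₂ heq
    have := hprod_factors t₁ h₁
    rw [heq, hprod_factors t₂ h₂] at this
    exact Finset.val_inj.mp this.symm
  have hprod_monic : ∀ t : Finset F[X], t ⊆ S → (∏ f ∈ t, f).Monic := by
    intro t ht
    exact monic_prod_of_monic _ _ (fun f hf => ((hmemS f).mp (ht hf)).1)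
  have hmonprod : ∀ s : Multiset F[X], (∀ f ∈ s, Monic f) → s.prod.Monic := by
    intro s hs
    rw [← Multiset.map_id s]
    exact monic_multiset_prod_of_monic _ _ hs
  have hprod_dvd : ∀ t : Finset F[X], t ⊆ S → (∏ f ∈ t, f) ∣ P := by
    intro t ht
    have hle : t.val ≤ S.val := Finset.val_le_iff.mpr ht
    have h1 : t.val.prod ∣ S.val.prod := Multiset.prod_dvd_prod_of_le hle
    have h2 : S.val.prod = P := by
      rw [hSval]
      exact eq_of_monic_of_associated
        (hmonprod _ (fun f hf => ((hmemS f).mp (by rwa [hSdef, Multiset.mem_toFinset])).1))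
        hPmonic (prod_normalizedFactors hP0)
    rw [hprodval, ← h2]
    exact h1
  have hSprod : (∏ f ∈ S, f) = P := by
    rw [hprodval, hSval]
    exact eq_of_monic_of_associated
      (hmonprod _ (fun f hf => ((hmemS f).mp (by rwa [hSdef, Multiset.mem_toFinset])).1))
      hPmonic (prod_normalizedFactors hP0)
  -- sigma on products
  have hsig_prod_image : ∀ t : Finset F[X], t ⊆ S →
      sigma (∏ f ∈ t, f) = ∏ f ∈ t.image sigma, f := by
    intro t ht
    rw [sigma_finset_prod]
    rw [Finset.prod_image (fun a ha b hb hab => by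
      have := congrArg sigma hab
      rwa [hinvS a (ht ha), hinvS b (ht hb)] at this)]
  -- the invariant-subset description of the code set
  set T : Finset (Finset F[X]) :=
    S.powerset.filter (fun t => t.Nonempty ∧ ∀ f ∈ t, sigma f ∈ t) with hTdef
  have hsetEq : {g : F[X] | g.Monic ∧ g ∣ X ^ n - 1 ∧ 1 ≤ g.natDegree ∧ SelfReciprocal g}
      = ↑(T.image (fun t => ∏ f ∈ t, f)) := by
    ext g
    simp only [Set.mem_setOf_eq, Finset.coe_image, Set.mem_image, Finset.mem_coe, hTdef,
      Finset.mem_filter, Finset.mem_powerset]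
    constructor
    · rintro ⟨hmon, hdvd, hdeg, hsr⟩
      have hg0 : g ≠ 0 := hmon.ne_zero
      have hgsq : Squarefree g := hPsq.squarefree_of_dvd hdvd
      set t : Finset F[X] := (normalizedFactors g).toFinset with htdef
      have htval : t.val = normalizedFactors g := by
        rw [htdef, Multiset.toFinset_val, Multiset.dedup_eq_self.mpr
          ((squarefree_iff_nodup_normalizedFactors hg0).mp hgsq)]
      have htS : t ⊆ S := by
        intro f hf
        rw [htdef, Multiset.mem_toFinset] at hf
        rw [hSdef, Multiset.mem_toFinset]
        exact Multiset.mem_of_le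
          ((dvd_iff_normalizedFactors_le_normalizedFactors hg0 hP0).mp hdvd) hf
      have htprod : (∏ f ∈ t, f) = g := by
        rw [hprodval, htval]
        exact eq_of_monic_of_associated
          (hmonprod _ (fun f hf => ((hmemS f).mp (htS (by rwa [htdef, Multiset.mem_toFinset]))).1))
          hmon (prod_normalizedFactors hg0)
      refine ⟨t, ⟨htS, ?_, ?_⟩, htprod⟩
      · -- nonempty
        rcases Finset.eq_empty_or_nonempty t with he | h
        · rw [he, Finset.prod_empty] at htprod
          rw [← htprod] at hdeg
          simp at hdeg
        · exact h
      · -- invariance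
        intro f hf
        have hsig : sigma g = g := hsr
        have himg : t.image sigma = t := by
          apply hΦinj _ (fun f' hf' => by
            obtain ⟨a, ha, rfl⟩ := Finset.mem_image.mp hf'
            exact hmapS a (htS ha)) _ htS
          rw [← hsig_prod_image t htS, htprod, hsig]
        rw [← himg]
        exact Finset.mem_image_of_mem _ hf
    · rintro ⟨t, ⟨htS, htne, htinv⟩, rfl⟩
      refine ⟨hprod_monic t htS, by rw [← hPdef]; exact hprod_dvd t htS, ?_, ?_⟩
      · -- degree at least one
        obtain ⟨f, hf⟩ := htne
        have h1 : (∏ f ∈ t, f).natDegree = ∑ f ∈ t, f.natDegree :=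
          natDegree_prod _ _ (fun f hf => ((hmemS f).mp (htS hf)).2.1.ne_zero)
        have h2 : 1 ≤ f.natDegree := ((hmemS f).mp (htS hf)).2.1.natDegree_pos
        rw [h1]
        calc 1 ≤ f.natDegree := h2
          _ ≤ ∑ f ∈ t, f.natDegree := Finset.single_le_sum (fun i _ => Nat.zero_le _) hf
      · -- self reciprocal
        show sigma _ = _
        rw [hsig_prod_image t htS]
        congr 1
        apply Finset.eq_of_subset_of_card_le
        · intro f hf
          obtain ⟨a, ha, rfl⟩ := Finset.mem_image.mp hf
          exact htinv a ha
        · rw [Finset.card_image_of_injOn (fun a ha b hb hab => by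
            have := congrArg sigma hab
            rwa [hinvS a (htS ha), hinvS b (htS hb)] at this)]
  -- counting invariant subsets
  have hTcard : T.card =
      2 ^ ((S.card + (S.filter (fun f => sigma f = f)).card) / 2) - 1 := by
    have hT' : T = (S.powerset.filter (fun t => ∀ f ∈ t, sigma f ∈ t)).erase ∅ := by
      ext t
      rw [hTdef]
      simp only [Finset.mem_filter, Finset.mem_powerset, Finset.mem_erase,
        Finset.nonempty_iff_ne_empty]
      tauto
    have hmem0 : (∅ : Finset F[X]) ∈ S.powerset.filter (fun t => ∀ f ∈ t, sigma f ∈ t) := by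
      simp
    rw [hT', Finset.card_erase_of_mem hmem0, card_invariant_powerset sigma S hmapS hinvS]
  -- the linear factors of P
  have hXa : ∀ a : F, a ≠ 0 → (X - C a) ∈ S := by
    intro a ha
    refine (hmemS _).mpr ⟨monic_X_sub_C a, irreducible_X_sub_C a, ?_⟩
    rw [dvd_iff_isRoot]
    have han : a ^ n = 1 := by
      have hq1n : a ^ (q - 1) = 1 := by
        rw [← hF]; exact FiniteField.pow_card_sub_one_eq_one a ha
      have hdvd : (q - 1) ∣ n := by
        rw [hn]
        simpa using Nat.sub_dvd_pow_sub_pow q 1 m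
      obtain ⟨c, hc⟩ := hdvd
      rw [hc, pow_mul, hq1n, one_pow]
    show P.IsRoot a
    rw [hPdef]
    simp only [IsRoot, eval_sub, eval_pow, eval_X, eval_one]
    rw [han, sub_self]
  -- fixed points of sigma on S
  have hfixset : S.filter (fun f => sigma f = f) = {X - C 1, X + C 1} := by
    ext f
    simp only [Finset.mem_filter, Finset.mem_insert, Finset.mem_singleton]
    constructor
    · rintro ⟨hfS, hfix⟩
      obtain ⟨hmon, hirr, hdvd⟩ := (hmemS f).mp hfS
      have h0 := hc0 f hdvd
      rcases hdeg1m f hfS with h1 | hmm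
      · have hfX : f = X + C (f.coeff 0) := hmon.eq_X_add_C h1
        rw [hfX, sigma_linear h0] at hfix
        have hcc : (f.coeff 0)⁻¹ = f.coeff 0 := by
          have h' := congrArg (fun p : F[X] => p.coeff 0) hfix
          simpa using h'
        have hsq : f.coeff 0 * f.coeff 0 = 1 := by
          nth_rewrite 2 [← hcc]
          exact mul_inv_cancel₀ h0
        rcases mul_self_eq_one_iff.mp hsq with h | h
        · right; rw [hfX, h, C_1]
        · left; rw [hfX, h, C_neg, C_1, ← sub_eq_add_neg]
      · exfalso
        exact sigma_ne_self_of_odd hchar2 hmon h0 hirr (by rw [hmm]; exact hmodd)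
          (by omega) hfix
    · intro h
      have hfix1 : sigma (X - C (1 : F)) = X - C 1 := by
        rw [sub_eq_add_neg, ← C_neg, sigma_linear (by simp : (-1 : F) ≠ 0), inv_neg_one]
      have hfix2 : sigma (X + C (1 : F)) = X + C 1 := by
        rw [sigma_linear (one_ne_zero : (1 : F) ≠ 0), inv_one]
      rcases h with rfl | rfl
      · exact ⟨hXa 1 one_ne_zero, hfix1⟩
      · refine ⟨?_, hfix2⟩
        have := hXa (-1) (by simp)
        rwa [C_neg, sub_neg_eq_add, C_1] at this
  have hfixcard : (S.filter (fun f => sigma f = f)).card = 2 := by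
    rw [hfixset]
    rw [Finset.card_insert_of_notMem, Finset.card_singleton]
    rw [Finset.mem_singleton]
    intro h
    have h' := congrArg (fun p : F[X] => p.coeff 0) h
    simp only [coeff_sub, coeff_add, coeff_X_zero, coeff_C_zero, zero_sub, zero_add] at h'
    exact hchar2 h'
  -- the degree-one factors
  have hS1 : S.filter (fun f => f.natDegree = 1)
      = (Finset.univ.filter (fun a : F => a ≠ 0)).image (fun a => X - C a) := by
    ext f
    simp only [Finset.mem_filter, Finset.mem_image, Finset.mem_univ, true_and]
    constructor
    · rintro ⟨hfS, h1⟩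
      obtain ⟨hmon, hirr, hdvd⟩ := (hmemS f).mp hfS
      have h0 := hc0 f hdvd
      refine ⟨-(f.coeff 0), by simpa using h0, ?_⟩
      rw [C_neg, sub_neg_eq_add]
      exact (hmon.eq_X_add_C h1).symm
    · rintro ⟨a, ha, rfl⟩
      exact ⟨hXa a ha, natDegree_X_sub_C a⟩
  have hS1card : (S.filter (fun f => f.natDegree = 1)).card = q - 1 := by
    rw [hS1, Finset.card_image_of_injective _ (fun a b hab => by
      have := congrArg (fun p : F[X] => p.coeff 0) hab
      simpa using this)]
    rw [Finset.filter_ne', Finset.card_erase_of_mem (Finset.mem_univ 0),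
      Finset.card_univ, hF]
  -- degree sum
  have hsumdeg : ∑ f ∈ S, f.natDegree = n := by
    have h := natDegree_prod S (fun f => f) (fun f hf => ((hmemS f).mp hf).2.1.ne_zero)
    rw [hSprod, hPdeg] at h
    exact h.symm
  have hsplit : ∑ f ∈ S, f.natDegree = (S.filter (fun f => f.natDegree = 1)).card
      + (S.filter (fun f => ¬ f.natDegree = 1)).card * m := by
    rw [← Finset.sum_filter_add_sum_filter_not S (fun f => f.natDegree = 1)]
    congr 1
    · rw [Finset.sum_congr rfl (fun f hf => (Finset.mem_filter.mp hf).2), Finset.sum_const,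
        smul_eq_mul, mul_one]
    · rw [Finset.sum_congr rfl (fun f hf => ?_), Finset.sum_const, smul_eq_mul]
      rcases hdeg1m f (Finset.mem_filter.mp hf).1 with h | h
      · exact absurd h (Finset.mem_filter.mp hf).2
      · exact h
  have hScard : S.card = (S.filter (fun f => f.natDegree = 1)).card
      + (S.filter (fun f => ¬ f.natDegree = 1)).card :=
    (Finset.card_filter_add_card_filter_not _).symm
  -- put the numbers together
  set t := (S.filter (fun f => ¬ f.natDegree = 1)).card with htdef2
  have hn' : n = (q - 1) + t * m := by
    rw [← hsumdeg, hsplit, hS1card]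
  have hqmt : q ^ m = q + t * m := by
    have h1 : n = q ^ m - 1 := hn
    generalize hR : t * m = R at hn' ⊢
    omega
  have key : q ^ m + (m - 1) * q + m = m * (t + q + 1) := by
    have hz : (q : ℤ) ^ m = q + t * m := by exact_mod_cast hqmt
    have h1m : 1 ≤ m := by omega
    zify [h1m]
    linear_combination hz
  have hexp : (q ^ m + (m - 1) * q + m) / (2 * m) = (t + q + 1) / 2 := by
    rw [key, show 2 * m = m * 2 by ring, Nat.mul_div_mul_left _ _ (by omega : 0 < m)]
  -- finish
  rw [hsetEq, Set.ncard_coe_finset]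
  rw [Finset.card_image_of_injOn (fun t₁ ht₁ t₂ ht₂ heq => by
    have h₁ := Finset.mem_powerset.mp (Finset.mem_filter.mp (by exact ht₁ : t₁ ∈ T)).1
    have h₂ := Finset.mem_powerset.mp (Finset.mem_filter.mp (by exact ht₂ : t₂ ∈ T)).1
    exact hΦinj _ h₁ _ h₂ heq)]
  rw [hTcard, hfixcard, hexp]
  have heq2 : (S.card + 2) / 2 = (t + q + 1) / 2 := by
    rw [hScard, hS1card]
    congr 1
    omega
  rw [heq2]
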